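/- (Elliptic key case: sup norm against Hölder seminorm and L^p norm.) Let l > 0 be noninteger. There is a constant C = C(N, l, p) > 0 such that for every bounded continuous function u : ℝ^N → ℝ with ⟨u⟩^{(l)} < ∞ and ‖u‖_p < ∞, one has sup_{ℝ^N} |u| ≤ C (⟨u⟩^{(l)})^{N/(pl+N)} (‖u‖_p)^{pl/(pl+N)}. -/

import Mathlib

open MeasureTheory Finset ENNReal

noncomputable def fdiffE {N : ℕ} (u : EuclideanSpace ℝ (Fin N) → ℝ) (k : ℕ)
    (h x : EuclideanSpace ℝ (Fin N)) : ℝ :=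
  ∑ i ∈ Finset.range (k + 1), (-1 : ℝ) ^ (k - i) * (k.choose i : ℝ) * u (x + (i : ℝ) • h)

noncomputable def semiE {N : ℕ} (u : EuclideanSpace ℝ (Fin N) → ℝ) (l : ℝ) (k : ℕ) : ℝ≥0∞ :=
  ⨆ (x : EuclideanSpace ℝ (Fin N)) (h : EuclideanSpace ℝ (Fin N)) (_ : h ≠ 0),
    ENNReal.ofReal (|fdiffE u k h x| / ‖h‖ ^ l)

noncomputable def lpE {N : ℕ} (u : EuclideanSpace ℝ (Fin N) → ℝ) (p : ℝ) : ℝ≥0∞ :=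
  (∫⁻ x : EuclideanSpace ℝ (Fin N), ENNReal.ofReal (|u x| ^ p)) ^ (1 / p)

noncomputable def normE {N : ℕ} (u : EuclideanSpace ℝ (Fin N) → ℝ) (l : ℝ) : ℝ≥0∞ :=
  (⨆ x : EuclideanSpace ℝ (Fin N), ENNReal.ofReal |u x|) + semiE u l (⌊l⌋₊ + 1)

section Aux
open Metric

variable {N : ℕ}

lemma comp_smul_le (f : EuclideanSpace ℝ (Fin N) → ℝ≥0∞)
    (x : EuclideanSpace ℝ (Fin N)) {c : ℝ} (hc : 1 ≤ c) :
    ∫⁻ h, f (x + c • h) ≤ ∫⁻ y, f y := by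
  have hc0 : c ≠ 0 := by positivity
  set e := (Homeomorph.smul (isUnit_iff_ne_zero.2 hc0).unit
      (α := EuclideanSpace ℝ (Fin N))).toMeasurableEquiv with he
  have hmap : Measure.map e (volume : Measure (EuclideanSpace ℝ (Fin N)))
      = Measure.map (c • ·) volume := rfl
  have h1 : ∫⁻ h, f (x + c • h) =
      ∫⁻ y, f (x + y) ∂(Measure.map (c • ·) (volume : Measure (EuclideanSpace ℝ (Fin N)))) := by
    rw [← hmap, MeasureTheory.lintegral_map_equiv (fun y => f (x + y)) e]
    rfl
  rw [h1, Measure.map_addHaar_smul volume hc0, lintegral_smul_measure,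
    lintegral_add_left_eq_self (fun y => f y) x]
  calc ENNReal.ofReal |(c ^ Module.finrank ℝ (EuclideanSpace ℝ (Fin N)))⁻¹| * ∫⁻ y, f y
      ≤ 1 * ∫⁻ y, f y := by
        gcongr
        rw [show (1:ℝ≥0∞) = ENNReal.ofReal 1 by simp]
        apply ENNReal.ofReal_le_ofReal
        rw [abs_of_nonneg (by positivity)]
        exact inv_le_one_of_one_le₀ (one_le_pow₀ hc)
    _ = ∫⁻ y, f y := one_mul _

lemma fdiff_zero (u : EuclideanSpace ℝ (Fin N) → ℝ) {k : ℕ} (hk : 1 ≤ k)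
    (x : EuclideanSpace ℝ (Fin N)) : fdiffE u k 0 x = 0 := by
  have hz : (∑ i ∈ Finset.range (k + 1), (-1 : ℤ) ^ i * k.choose i) = 0 := by
    rw [Int.alternating_sum_range_choose]
    rw [if_neg (by omega : ¬ k = 0)]
  have : fdiffE u k 0 x = ((-1 : ℝ) ^ k * u x) * ∑ i ∈ Finset.range (k + 1),
      (-1 : ℝ) ^ i * (k.choose i : ℝ) := by
    rw [fdiffE, Finset.mul_sum]
    refine Finset.sum_congr rfl fun i hi => ?_
    have hik : i ≤ k := Nat.lt_succ_iff.mp (Finset.mem_range.mp hi)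
    have hs : (-1 : ℝ) ^ (k - i) = (-1) ^ k * (-1) ^ i := by
      calc (-1 : ℝ) ^ (k - i) = (-1) ^ (k - i) * ((-1) ^ 2) ^ i := by norm_num
        _ = (-1) ^ ((k - i) + 2 * i) := by rw [← pow_mul, ← pow_add]
        _ = (-1) ^ k * (-1) ^ i := by
            rw [show (k - i) + 2 * i = k + i by omega, pow_add]
    rw [hs, smul_zero, add_zero]; ring
  rw [this]
  have : (∑ i ∈ Finset.range (k + 1), (-1 : ℝ) ^ i * (k.choose i : ℝ)) = 0 := by
    exact_mod_cast congrArg (Int.cast : ℤ → ℝ) hz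
  rw [this, mul_zero]

lemma semi_bound {u : EuclideanSpace ℝ (Fin N) → ℝ} {l : ℝ} {k : ℕ} (hl : 0 < l) (hk : 1 ≤ k)
    (hfin : semiE u l k < ⊤) (x h : EuclideanSpace ℝ (Fin N)) :
    |fdiffE u k h x| ≤ (semiE u l k).toReal * ‖h‖ ^ l := by
  rcases eq_or_ne h 0 with rfl | hh
  · rw [fdiff_zero u hk x]
    simp [Real.zero_rpow hl.ne']
  · have hpos : (0:ℝ) < ‖h‖ ^ l := Real.rpow_pos_of_pos (norm_pos_iff.mpr hh) l
    have hle : ENNReal.ofReal (|fdiffE u k h x| / ‖h‖ ^ l) ≤ semiE u l k := by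
      refine le_trans ?_ (le_iSup _ x)
      refine le_trans ?_ (le_iSup _ h)
      exact le_iSup (fun _ : h ≠ 0 => ENNReal.ofReal (|fdiffE u k h x| / ‖h‖ ^ l)) hh
    have := ENNReal.toReal_mono hfin.ne hle
    rw [ENNReal.toReal_ofReal (by positivity)] at this
    calc |fdiffE u k h x| = |fdiffE u k h x| / ‖h‖ ^ l * ‖h‖ ^ l := by field_simp
      _ ≤ (semiE u l k).toReal * ‖h‖ ^ l := by gcongr

lemma opt {l θ : ℝ} (hl : 0 < l) (hθ : 0 < θ) {M A B : ℝ} (hM : 0 ≤ M) (hA : 0 ≤ A) (hB : 0 ≤ B)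
    (H : ∀ r : ℝ, 0 < r → M ≤ A * r ^ l + B * r ^ (-θ)) :
    M ≤ 2 * A ^ (θ / (l + θ)) * B ^ (l / (l + θ)) := by
  have hlθ : 0 < l + θ := by linarith
  have hef : θ / (l + θ) + l / (l + θ) = 1 := by field_simp; ring
  rcases hA.eq_or_lt with hA0 | hA0
  · have hM0 : M ≤ 0 := by
      refine le_of_forall_pos_le_add (fun ε hε => ?_)
      rcases hB.eq_or_lt with hB0 | hB0
      · have := H 1 one_pos; rw [← hA0, ← hB0] at this; simp at this; linarith
      · have hr : (0:ℝ) < (B / ε) ^ (1 / θ) := Real.rpow_pos_of_pos (by positivity) _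
        have := H _ hr
        rw [← hA0, zero_mul, zero_add] at this
        have hcomp : ((B / ε) ^ (1/θ)) ^ (-θ) = ε / B := by
          rw [← Real.rpow_mul (by positivity), show (1/θ) * (-θ) = -1 by field_simp,
            Real.rpow_neg_one, inv_div]
        rw [hcomp, mul_div_assoc', mul_comm, mul_div_assoc, div_self hB0.ne', mul_one] at this
        linarith
    have : (0:ℝ) ≤ 2 * A ^ (θ / (l + θ)) * B ^ (l / (l + θ)) := by positivity
    linarith
  rcases hB.eq_or_lt with hB0 | hB0
  · have hM0 : M ≤ 0 := by
      refine le_of_forall_pos_le_add (fun ε hε => ?_)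
      have hr : (0:ℝ) < (ε / A) ^ (1 / l) := Real.rpow_pos_of_pos (by positivity) _
      have := H _ hr
      have hcomp : ((ε / A) ^ (1/l)) ^ l = ε / A := by
        rw [← Real.rpow_mul (by positivity), show (1/l) * l = 1 by field_simp, Real.rpow_one]
      rw [← hB0, zero_mul, add_zero, hcomp, mul_div_assoc', mul_comm, mul_div_assoc,
        div_self hA0.ne', mul_one] at this
      linarith
    have : (0:ℝ) ≤ 2 * A ^ (θ / (l + θ)) * B ^ (l / (l + θ)) := by positivity
    rw [← hB0, Real.zero_rpow (by positivity : l / (l + θ) ≠ 0)]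
    linarith
  set r := (B / A) ^ (1 / (l + θ)) with hr
  have hrpos : (0:ℝ) < r := Real.rpow_pos_of_pos (by positivity) _
  have h1 : A * r ^ l = A ^ (θ / (l + θ)) * B ^ (l / (l + θ)) := by
    rw [hr, ← Real.rpow_mul (by positivity), show (1/(l+θ)) * l = l/(l+θ) by ring,
      Real.div_rpow hB hA]
    rw [show θ/(l+θ) = 1 - l/(l+θ) by linarith, Real.rpow_sub hA0, Real.rpow_one]
    ring
  have h2 : B * r ^ (-θ) = A ^ (θ / (l + θ)) * B ^ (l / (l + θ)) := by
    rw [hr, ← Real.rpow_mul (by positivity), show (1/(l+θ)) * (-θ) = -(θ/(l+θ)) by ring,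
      Real.rpow_neg (by positivity), Real.div_rpow hB hA, inv_div]
    rw [show l/(l+θ) = 1 - θ/(l+θ) by linarith, Real.rpow_sub hB0, Real.rpow_one]
    ring
  have := H r hrpos
  rw [h1, h2] at this
  linarith

end Aux

/-- Elliptic key case: sup norm against Hölder seminorm and `L^p` norm. -/
theorem elliptic_sup_interpolation (N : ℕ) (hN : 1 ≤ N) (p : ℝ) (hp : 1 < p)
    (l : ℝ) (hl : 0 < l) (hlni : ∀ n : ℤ, (n : ℝ) ≠ l) :
    ∃ C : ℝ, 0 < C ∧
      ∀ u : EuclideanSpace ℝ (Fin N) → ℝ, Continuous u →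
        Bornology.IsBounded (Set.range u) →
        semiE u l ⌈l⌉₊ < ⊤ → lpE u p < ⊤ →
        ∀ x : EuclideanSpace ℝ (Fin N),
          |u x| ≤ C * (semiE u l ⌈l⌉₊).toReal ^ ((N : ℝ) / (p * l + N)) *
            (lpE u p).toReal ^ (p * l / (p * l + N)) := by
  classical
  set E := EuclideanSpace ℝ (Fin N)
  set k := ⌈l⌉₊ with hkdef
  have hk1 : 1 ≤ k := Nat.ceil_pos.mpr hl
  have hp0 : 0 < p := lt_trans zero_lt_one hp
  have hpq : p.HolderConjugate (Real.conjExponent p) := Real.HolderConjugate.conjExponent hp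
  set q := Real.conjExponent p with hqdef
  have hq0 : 0 < q := hpq.symm.pos
  -- volume of the unit ball
  set V1 : ℝ≥0∞ := volume (Metric.ball (0 : E) 1) with hV1def
  have hV1pos : 0 < V1 := Metric.measure_ball_pos volume 0 one_pos
  have hV1top : V1 < ⊤ := measure_ball_lt_top
  set c' : ℝ := (V1 ^ (-(1/p))).toReal with hc'def
  have hV1rpos : 0 < V1 ^ (-(1/p)) := ENNReal.rpow_pos hV1pos hV1top.ne
  have hV1rtop : V1 ^ (-(1/p)) ≠ ⊤ := by
    rw [ENNReal.rpow_neg]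
    simp only [ne_eq, ENNReal.inv_eq_top]
    exact (ENNReal.rpow_pos hV1pos hV1top.ne).ne'
  have hc'pos : 0 < c' := ENNReal.toReal_pos hV1rpos.ne' hV1rtop
  set K : ℝ := 2 ^ k * c' with hKdef
  have hKpos : 0 < K := by positivity
  set e' : ℝ := (N : ℝ) / (p * l + N) with he'def
  set f' : ℝ := p * l / (p * l + N) with hf'def
  have hplN : 0 < p * l + N := by
    have : (1:ℝ) ≤ (N:ℝ) := by exact_mod_cast hN
    nlinarith
  have hf'pos : 0 < f' := by rw [hf'def]; positivity
  refine ⟨2 * K ^ f', by positivity, ?_⟩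
  intro u hu hb hsem hlp x
  set S := (semiE u l k).toReal with hSdef
  set L := (lpE u p).toReal with hLdef
  have hS0 : 0 ≤ S := ENNReal.toReal_nonneg
  have hL0 : 0 ≤ L := ENNReal.toReal_nonneg
  set Λ := lpE u p with hΛdef
  set I := ∫⁻ y : E, ENNReal.ofReal (|u y| ^ p) with hIdef
  have hΛI : Λ = I ^ (1/p) := rfl
  -- the core inequality
  have core : ∀ r : ℝ, 0 < r → |u x| ≤ S * r ^ l + (K * L) * r ^ (-((N:ℝ)/p)) := by
    intro r hr
    set B_r := Metric.ball (0 : E) r with hBdef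
    set V := volume B_r with hVdef
    have hVpos : 0 < V := Metric.measure_ball_pos volume 0 hr
    have hVtop : V ≠ ⊤ := measure_ball_lt_top.ne
    have hV : V = ENNReal.ofReal (r ^ N) * V1 := by
      rw [hVdef, hBdef, hV1def, Measure.addHaar_ball_of_pos volume 0 hr,
        finrank_euclideanSpace_fin]
    have hVrtop : V ^ (-(1/p)) ≠ ⊤ := by
      rw [ENNReal.rpow_neg]
      simp only [ne_eq, ENNReal.inv_eq_top]
      exact (ENNReal.rpow_pos hVpos hVtop).ne'
    -- pointwise bound
    set g : ℕ → E → ℝ := fun i h => (-1:ℝ) ^ (k - i) * (k.choose i : ℝ) * u (x + (i:ℝ) • h)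
      with hgdef
    have hsum : ∀ h : E, fdiffE u k h x = (∑ j ∈ range k, g (j+1) h) + g 0 h := by
      intro h
      rw [fdiffE]
      exact Finset.sum_range_succ' (fun i => g i h) k
    have hg0 : ∀ h : E, g 0 h = (-1:ℝ) ^ k * u x := by
      intro h; simp [hgdef]
    have hptR : ∀ h : E, |u x| ≤ |fdiffE u k h x| +
        ∑ j ∈ range k, (k.choose (j+1) : ℝ) * |u (x + ((j+1 : ℕ) : ℝ) • h)| := by
      intro h
      have h0 : g 0 h = fdiffE u k h x - ∑ j ∈ range k, g (j+1) h := by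
        have := hsum h; linarith
      calc |u x| = |g 0 h| := by
            rw [hg0 h, abs_mul, abs_pow, abs_neg, abs_one, one_pow, one_mul]
        _ = |fdiffE u k h x - ∑ j ∈ range k, g (j+1) h| := by rw [h0]
        _ ≤ |fdiffE u k h x| + |∑ j ∈ range k, g (j+1) h| := abs_sub _ _
        _ ≤ |fdiffE u k h x| + ∑ j ∈ range k, |g (j+1) h| := by
            gcongr
            exact Finset.abs_sum_le_sum_abs _ _
        _ = |fdiffE u k h x| +
            ∑ j ∈ range k, (k.choose (j+1) : ℝ) * |u (x + ((j+1 : ℕ) : ℝ) • h)| := by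
            congr 1
            refine Finset.sum_congr rfl fun j _ => ?_
            rw [hgdef]
            simp only [abs_mul, abs_pow, abs_neg, abs_one, one_pow, one_mul,
              Nat.abs_cast]
    -- ENNReal versions
    set F : E → ℝ≥0∞ := fun h => ENNReal.ofReal |fdiffE u k h x| with hFdef
    set G : ℕ → E → ℝ≥0∞ := fun j h =>
      ENNReal.ofReal ((k.choose (j+1) : ℝ) * |u (x + ((j+1 : ℕ) : ℝ) • h)|) with hGdef
    have hcont : ∀ c : ℝ, Continuous fun h : E => u (x + c • h) := by
      intro c
      exact hu.comp (continuous_const.add (continuous_id.const_smul c))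
    have hFm : Measurable F := by
      apply (ENNReal.continuous_ofReal.comp ?_).measurable
      apply Continuous.abs
      have : (fun h : E => fdiffE u k h x) = fun h =>
          ∑ i ∈ range (k+1), (-1:ℝ) ^ (k - i) * (k.choose i : ℝ) * u (x + (i:ℝ) • h) := rfl
      rw [this]
      exact continuous_finset_sum _ fun i _ => continuous_const.mul (hcont (i:ℝ))
    have hGm : ∀ j, Measurable (G j) := by
      intro j
      exact (ENNReal.continuous_ofReal.comp (continuous_const.mul (hcont _).abs)).measurable
    have hptE : ∀ h : E, ENNReal.ofReal |u x| ≤ F h + ∑ j ∈ range k, G j h := by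
      intro h
      calc ENNReal.ofReal |u x| ≤ ENNReal.ofReal (|fdiffE u k h x| +
          ∑ j ∈ range k, (k.choose (j+1) : ℝ) * |u (x + ((j+1 : ℕ) : ℝ) • h)|) :=
            ENNReal.ofReal_le_ofReal (hptR h)
        _ = F h + ∑ j ∈ range k, G j h := by
            rw [ENNReal.ofReal_add (abs_nonneg _)
              (Finset.sum_nonneg fun j _ => by positivity),
              ENNReal.ofReal_sum_of_nonneg (fun j _ => by positivity)]
    have stepA : ENNReal.ofReal |u x| * V ≤
        (∫⁻ h in B_r, F h) + ∑ j ∈ range k, ∫⁻ h in B_r, G j h := by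
      calc ENNReal.ofReal |u x| * V = ∫⁻ _ in B_r, ENNReal.ofReal |u x| :=
            (setLIntegral_const _ _).symm
        _ ≤ ∫⁻ h in B_r, (F h + ∑ j ∈ range k, G j h) := lintegral_mono fun h => hptE h
        _ = _ := by
            rw [lintegral_add_left hFm, lintegral_finset_sum _ fun j _ => hGm j]
    have stepB : (∫⁻ h in B_r, F h) ≤ ENNReal.ofReal (S * r ^ l) * V := by
      calc (∫⁻ h in B_r, F h) ≤ ∫⁻ _ in B_r, ENNReal.ofReal (S * r ^ l) := by
            refine setLIntegral_mono measurable_const fun h hh => ?_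
            apply ENNReal.ofReal_le_ofReal
            refine le_trans (semi_bound hl hk1 hsem x h) ?_
            have hnorm : ‖h‖ < r := by rwa [← mem_ball_zero_iff]
            have := Real.rpow_le_rpow (norm_nonneg h) hnorm.le hl.le
            exact mul_le_mul_of_nonneg_left this hS0
        _ = ENNReal.ofReal (S * r ^ l) * V := setLIntegral_const _ _
    have stepC : ∀ j ∈ range k, (∫⁻ h in B_r, G j h) ≤
        ENNReal.ofReal ((k.choose (j+1) : ℝ)) * (Λ * V ^ (1/q)) := by
      intro j _
      set c : ℝ := ((j+1 : ℕ) : ℝ) with hcdef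
      have hc1 : (1:ℝ) ≤ c := by rw [hcdef]; exact_mod_cast Nat.succ_le_succ (Nat.zero_le j)
      set f : E → ℝ≥0∞ := fun h => ENNReal.ofReal |u (x + c • h)| with hfdef
      have hfm : Measurable f := (ENNReal.continuous_ofReal.comp (hcont c).abs).measurable
      set gi : E → ℝ≥0∞ := B_r.indicator (fun _ => 1) with hgidef
      have hgim : Measurable gi := measurable_const.indicator measurableSet_ball
      have h1 : (∫⁻ h in B_r, G j h) =
          ENNReal.ofReal ((k.choose (j+1) : ℝ)) * ∫⁻ h in B_r, f h := by
        rw [← lintegral_const_mul' _ _ ENNReal.ofReal_ne_top]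
        refine lintegral_congr fun h => ?_
        simp only [hGdef, hfdef]
        rw [ENNReal.ofReal_mul (by positivity)]
      have h2 : (∫⁻ h in B_r, f h) = ∫⁻ h, (f * gi) h := by
        rw [← lintegral_indicator measurableSet_ball]
        refine lintegral_congr fun h => ?_
        by_cases hh : h ∈ B_r <;> simp [hgidef, Set.indicator, hh]
        · intro h'; exact absurd (mem_ball_zero_iff.mp hh) (not_lt.mpr h')
        · intro h'; exact absurd (mem_ball_zero_iff.mpr h') hh
      have h3 := ENNReal.lintegral_mul_le_Lp_mul_Lq volume hpq hfm.aemeasurable hgim.aemeasurable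
      have h4 : (∫⁻ h, gi h ^ q) = V := by
        have heq : ∀ h : E, gi h ^ q = B_r.indicator (fun _ => (1:ℝ≥0∞)) h := by
          intro h
          by_cases hh : h ∈ B_r <;>
            simp [hgidef, Set.indicator, hh, ENNReal.one_rpow, ENNReal.zero_rpow_of_pos hq0]
        rw [lintegral_congr heq, lintegral_indicator measurableSet_ball]
        simp [hVdef]
        rfl
      have h5 : (∫⁻ h, f h ^ p) ≤ I := by
        have heq : ∀ h : E, f h ^ p = (fun y => ENNReal.ofReal (|u y| ^ p)) (x + c • h) := by
          intro h
          exact ENNReal.ofReal_rpow_of_nonneg (abs_nonneg _) hp0.le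
        rw [lintegral_congr heq, hIdef]
        exact comp_smul_le _ x hc1
      have h6 : (∫⁻ h, f h ^ p) ^ (1/p) ≤ Λ := by
        rw [hΛI]
        exact ENNReal.rpow_le_rpow h5 (by positivity)
      calc (∫⁻ h in B_r, G j h)
          = ENNReal.ofReal ((k.choose (j+1) : ℝ)) * ∫⁻ h, (f * gi) h := by rw [h1, h2]
        _ ≤ ENNReal.ofReal ((k.choose (j+1) : ℝ)) *
            ((∫⁻ h, f h ^ p) ^ (1/p) * (∫⁻ h, gi h ^ q) ^ (1/q)) := by gcongr
        _ ≤ ENNReal.ofReal ((k.choose (j+1) : ℝ)) * (Λ * V ^ (1/q)) := by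
            rw [h4]; gcongr
    have hsumchoose : (∑ j ∈ range k, ENNReal.ofReal ((k.choose (j+1) : ℝ))) ≤
        ENNReal.ofReal ((2:ℝ) ^ k) := by
      rw [← ENNReal.ofReal_sum_of_nonneg (fun j _ => by positivity)]
      apply ENNReal.ofReal_le_ofReal
      have hnat : (∑ j ∈ range k, k.choose (j+1)) ≤ 2 ^ k := by
        have h1 := Nat.sum_range_choose k
        have h2 := Finset.sum_range_succ' (fun i => k.choose i) k
        omega
      calc (∑ j ∈ range k, (k.choose (j+1) : ℝ))
          = ((∑ j ∈ range k, k.choose (j+1) : ℕ) : ℝ) := by push_cast; ring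
        _ ≤ ((2:ℕ) ^ k : ℝ) := by exact_mod_cast hnat
        _ = (2:ℝ) ^ k := by push_cast; ring
    have main1 : ENNReal.ofReal |u x| * V ≤
        ENNReal.ofReal (S * r ^ l) * V + ENNReal.ofReal ((2:ℝ) ^ k) * (Λ * V ^ (1/q)) := by
      refine stepA.trans (add_le_add stepB ?_)
      calc (∑ j ∈ range k, ∫⁻ h in B_r, G j h)
          ≤ ∑ j ∈ range k, ENNReal.ofReal ((k.choose (j+1) : ℝ)) * (Λ * V ^ (1/q)) :=
            Finset.sum_le_sum stepC
        _ = (∑ j ∈ range k, ENNReal.ofReal ((k.choose (j+1) : ℝ))) * (Λ * V ^ (1/q)) :=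
            (Finset.sum_mul _ _ _).symm
        _ ≤ ENNReal.ofReal ((2:ℝ) ^ k) * (Λ * V ^ (1/q)) := by gcongr
    have hVq : V ^ (1/q) = V * V ^ (-(1/p)) := by
      have hq1 : 1/q = 1 + (-(1/p)) := by
        have := hpq.inv_add_inv_eq_one
        rw [one_div, one_div]
        linarith
      rw [hq1, ENNReal.rpow_add _ _ hVpos.ne' hVtop, ENNReal.rpow_one]
    have main2 : ENNReal.ofReal |u x| ≤
        ENNReal.ofReal (S * r ^ l) + ENNReal.ofReal ((2:ℝ) ^ k) * Λ * V ^ (-(1/p)) := by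
      rw [← ENNReal.mul_le_mul_iff_left hVpos.ne' hVtop]
      refine main1.trans_eq ?_
      rw [hVq]; ring
    have hmulne : ENNReal.ofReal ((2:ℝ) ^ k) * Λ * V ^ (-(1/p)) ≠ ⊤ :=
      ENNReal.mul_ne_top (ENNReal.mul_ne_top ENNReal.ofReal_ne_top hlp.ne) hVrtop
    have hRHStop : ENNReal.ofReal (S * r ^ l) +
        ENNReal.ofReal ((2:ℝ) ^ k) * Λ * V ^ (-(1/p)) ≠ ⊤ :=
      ENNReal.add_ne_top.mpr ⟨ENNReal.ofReal_ne_top, hmulne⟩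
    have hreal := ENNReal.toReal_mono hRHStop main2
    rw [ENNReal.toReal_ofReal (abs_nonneg _), ENNReal.toReal_add ENNReal.ofReal_ne_top hmulne,
      ENNReal.toReal_ofReal (by positivity), ENNReal.toReal_mul, ENNReal.toReal_mul,
      ENNReal.toReal_ofReal (by positivity)] at hreal
    have hVr : (V ^ (-(1/p))).toReal = r ^ (-((N:ℝ)/p)) * c' := by
      rw [hV, ENNReal.mul_rpow_of_ne_zero (by positivity) hV1pos.ne',
        ENNReal.toReal_mul, ENNReal.ofReal_rpow_of_pos (by positivity),
        ENNReal.toReal_ofReal (by positivity), hc'def]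
      congr 1
      rw [← Real.rpow_natCast r N, ← Real.rpow_mul hr.le]
      congr 1
      ring
    rw [hVr] at hreal
    have hfin : (2:ℝ) ^ k * Λ.toReal * (r ^ (-((N:ℝ)/p)) * c') = (K * L) * r ^ (-((N:ℝ)/p)) := by
      rw [hKdef, hLdef, hΛdef]; ring
    linarith [hreal, hfin.le, hfin.ge]
  -- optimization
  have hθ : (0:ℝ) < (N:ℝ)/p := by
    have : (1:ℝ) ≤ (N:ℝ) := by exact_mod_cast hN
    positivity
  have hopt := opt hl hθ (abs_nonneg (u x)) hS0 (by positivity : (0:ℝ) ≤ K * L) core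
  have hp0' : p ≠ 0 := hp0.ne'
  have hden : l + (N:ℝ)/p ≠ 0 := by positivity
  have hshared : l + (N:ℝ)/p = (p*l+N)/p := by field_simp
  have hee : ((N:ℝ)/p) / (l + (N:ℝ)/p) = e' := by
    rw [he'def, hshared, div_div_eq_mul_div, div_mul_cancel₀ _ hp0']
  have hff : l / (l + (N:ℝ)/p) = f' := by
    rw [hf'def, hshared, div_div_eq_mul_div, mul_comm]
  rw [hee, hff, Real.mul_rpow hKpos.le hL0] at hopt
  calc |u x| ≤ 2 * S ^ e' * (K ^ f' * L ^ f') := hopt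
    _ = 2 * K ^ f' * S ^ e' * L ^ f' := by ring
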